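/- arXiv:2501.07311 — 2 statements merged into one kernel-verified Lean document; each statement's English description precedes it below -/
import Mathlib

section
/- For α = (α_1,…,α_n), β = (β_1,…,β_n) ∈ Z_2^{2n} written in consecutive pairs α_i = (α_{2i−1}, α_{2i}) ∈ Z_2^2, let f(α) = (α_1, α_2 + |α_1|(1,1), …, α_i + Σ_{k<i}|α_k|(1,1), …, α_n + Σ_{k<n}|α_k|(1,1), Σ_{k≤n}|α_k|) ∈ Z_2^{2n+1}, where |α_k| = α_{2k−1} + α_{2k} mod 2. Then f(α)·f(β) ≡ Σ_{i=1}^n |α_i × β_i| mod 2, where |α_i × β_i| = α_{2i−1}β_{2i} + α_{2i}β_{2i−1} mod 2 (well, the cross product magnitude α_{2i−1}β_{2i} − α_{2i}β_{2i−1} taken mod 2). -/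
/-- `|v| = v₁ + v₂ mod 2` for a pair `v ∈ Z_2^2`. -/
def pabs (v : ZMod 2 × ZMod 2) : ZMod 2 := v.1 + v.2

/-- `|v × w|`: the mod-2 determinant of two 2-vectors. -/
def pcross (v w : ZMod 2 × ZMod 2) : ZMod 2 := v.1 * w.2 + v.2 * w.1

/-- The mod-2 dot product on `Z_2^{2n}` written as `n` consecutive pairs. -/
def pdot {n : ℕ} (a b : Fin n → ZMod 2 × ZMod 2) : ZMod 2 :=
  ∑ i, ((a i).1 * (b i).1 + (a i).2 * (b i).2)

/-- The mod-2 dot product on `Z_2^{2n+1}`, modelled as `(Z_2^2)^n × Z_2`. -/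
def fdot {n : ℕ} (a b : (Fin n → ZMod 2 × ZMod 2) × ZMod 2) : ZMod 2 :=
  pdot a.1 b.1 + a.2 * b.2

/-- The map `f : Z_2^{2n} → Z_2^{2n+1}`,
`f(α) = (α₁, α₂ + |α₁|(1,1), …, αᵢ + Σ_{k<i}|α_k|(1,1), …, Σ_{k≤n}|α_k|)`. -/
def fmap {n : ℕ} (α : Fin n → ZMod 2 × ZMod 2) : (Fin n → ZMod 2 × ZMod 2) × ZMod 2 :=
  (fun i => α i + (∑ k ∈ Finset.Iio i, pabs (α k), ∑ k ∈ Finset.Iio i, pabs (α k)),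
   ∑ k, pabs (α k))

lemma key (n : ℕ) (a b : ℕ → ZMod 2) :
    (∑ i ∈ Finset.range n, a i) * (∑ i ∈ Finset.range n, b i) =
      ∑ i ∈ Finset.range n,
        (a i * b i + (∑ k ∈ Finset.range i, a k) * b i
          + a i * (∑ k ∈ Finset.range i, b k)) := by
  induction n with
  | zero => simp
  | succ m ih =>
    rw [Finset.sum_range_succ, Finset.sum_range_succ, Finset.sum_range_succ, ← ih]
    ring

lemma two_eq_zero : (2 : ZMod 2) = 0 := rfl

lemma iio_sum {n : ℕ} (g : Fin n → ZMod 2) (i : Fin n) :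
    ∑ k ∈ Finset.Iio i, g k
      = ∑ k ∈ Finset.range i.val, (fun m => if h : m < n then g ⟨m, h⟩ else 0) k := by
  rw [← Nat.Iio_eq_range, ← Fin.map_valEmbedding_Iio, Finset.sum_map]
  apply Finset.sum_congr rfl
  intro k _
  simp [Fin.valEmbedding, k.isLt]

/-- `f(α)·f(β) ≡ Σᵢ |αᵢ × βᵢ| mod 2`. -/
theorem stmt9 {n : ℕ} (α β : Fin n → ZMod 2 × ZMod 2) :
    fdot (fmap α) (fmap β) = ∑ i, pcross (α i) (β i) := by
  classical
  set A : ℕ → ZMod 2 := fun m => if h : m < n then pabs (α ⟨m, h⟩) else 0 with hA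
  set B : ℕ → ZMod 2 := fun m => if h : m < n then pabs (β ⟨m, h⟩) else 0 with hB
  have hAi : ∀ i : Fin n, A i.val = pabs (α i) := by
    intro i; simp [hA, i.isLt]
  have hBi : ∀ i : Fin n, B i.val = pabs (β i) := by
    intro i; simp [hB, i.isLt]
  have hIA : ∀ i : Fin n, ∑ k ∈ Finset.Iio i, pabs (α k) = ∑ k ∈ Finset.range i.val, A k :=
    fun i => iio_sum _ i
  have hIB : ∀ i : Fin n, ∑ k ∈ Finset.Iio i, pabs (β k) = ∑ k ∈ Finset.range i.val, B k :=
    fun i => iio_sum _ i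
  have hsumA : ∑ k, pabs (α k) = ∑ k ∈ Finset.range n, A k := by
    rw [Finset.sum_range fun m => A m]
    exact Finset.sum_congr rfl fun i _ => (hAi i).symm
  have hsumB : ∑ k, pabs (β k) = ∑ k ∈ Finset.range n, B k := by
    rw [Finset.sum_range fun m => B m]
    exact Finset.sum_congr rfl fun i _ => (hBi i).symm
  simp only [fdot, fmap, pdot, pcross]
  rw [hsumA, hsumB, key, Finset.sum_range fun m =>
      A m * B m + (∑ k ∈ Finset.range m, A k) * B m + A m * (∑ k ∈ Finset.range m, B k)]
  rw [← Finset.sum_add_distrib]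
  apply Finset.sum_congr rfl
  intro i _
  rw [hIA i, hIB i, hAi i, hBi i]
  set S := ∑ k ∈ Finset.range i.val, A k
  set T := ∑ k ∈ Finset.range i.val, B k
  simp only [pabs, Prod.fst_add, Prod.snd_add]
  ring_nf
  simp only [show (2 : ZMod 2) = 0 from rfl, mul_zero, add_zero, zero_add]
end

section
/- The map f : Z_2^{2n} → Z_2^{2n+1}, defined by f(α) = (α_1, α_2 + |α_1|(1,1), …, α_i + Σ_{k<i}|α_k|(1,1), …, Σ_{k=1}^n|α_k|) with |α_k| = α_{2k−1} + α_{2k} mod 2, is an injective group homomorphism whose image is exactly the even subgroup (Z_2^{2n+1})_ev = {b ∈ Z_2^{2n+1} : b·b ≡ 0 mod 2}. -/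
lemma z2_sq : ∀ z : ZMod 2, z * z = z := by decide
lemma z2_add_self : ∀ z : ZMod 2, z + z = 0 := by decide

lemma pabs_add_diag (v : ZMod 2 × ZMod 2) (s : ZMod 2) : pabs (v + (s, s)) = pabs v := by
  simp only [pabs, Prod.fst_add, Prod.snd_add]
  linear_combination z2_add_self s

def gmap {n : ℕ} (b : (Fin n → ZMod 2 × ZMod 2) × ZMod 2) : Fin n → ZMod 2 × ZMod 2 :=
  fun i => b.1 i + (∑ k ∈ Finset.Iio i, pabs (b.1 k), ∑ k ∈ Finset.Iio i, pabs (b.1 k))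

lemma sum_pabs_diag {n : ℕ} (α : Fin n → ZMod 2 × ZMod 2)
    (c : Fin n → ZMod 2) (s : Finset (Fin n)) :
    ∑ k ∈ s, pabs (α k + (c k, c k)) = ∑ k ∈ s, pabs (α k) :=
  Finset.sum_congr rfl fun k _ => pabs_add_diag _ _

lemma gmap_fmap {n : ℕ} (α : Fin n → ZMod 2 × ZMod 2) : gmap (fmap α) = α := by
  funext i
  show (fmap α).1 i + (∑ k ∈ Finset.Iio i, pabs ((fmap α).1 k),
      ∑ k ∈ Finset.Iio i, pabs ((fmap α).1 k)) = α i
  have h : ∑ k ∈ Finset.Iio i, pabs ((fmap α).1 k) = ∑ k ∈ Finset.Iio i, pabs (α k) :=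
    sum_pabs_diag α _ _
  rw [h]
  show α i + (_, _) + (_, _) = α i
  ext
  · simp only [Prod.fst_add]; linear_combination z2_add_self (∑ k ∈ Finset.Iio i, pabs (α k))
  · simp only [Prod.snd_add]; linear_combination z2_add_self (∑ k ∈ Finset.Iio i, pabs (α k))

lemma fdot_self {n : ℕ} (b : (Fin n → ZMod 2 × ZMod 2) × ZMod 2) :
    fdot b b = (∑ i, pabs (b.1 i)) + b.2 := by
  simp only [fdot, pdot, pabs, z2_sq]


/-- `f` is an injective group homomorphism from `Z_2^{2n}` to `Z_2^{2n+1}`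
whose image is exactly the even subgroup `{b : b·b = 0}`. -/
theorem stmt10 {n : ℕ} :
    Function.Injective (fmap (n := n)) ∧
    (∀ α β : Fin n → ZMod 2 × ZMod 2, fmap (α + β) = fmap α + fmap β) ∧
    Set.range (fmap (n := n)) = {b | fdot b b = 0} := by
  have hab : ∀ (α β : Fin n → ZMod 2 × ZMod 2) (k : Fin n),
      pabs (α k + β k) = pabs (α k) + pabs (β k) := by
    intro α β k; simp only [pabs, Prod.fst_add, Prod.snd_add]; ring
  refine ⟨fun α β h => by simpa [gmap_fmap] using congrArg gmap h, ?_, ?_⟩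
  · intro α β
    unfold fmap
    have hsum : ∀ s : Finset (Fin n),
        ∑ k ∈ s, pabs (α k + β k) = ∑ k ∈ s, pabs (α k) + ∑ k ∈ s, pabs (β k) := by
      intro s
      rw [← Finset.sum_add_distrib]
      exact Finset.sum_congr rfl fun k _ => hab α β k
    ext i <;> simp [hsum, Pi.add_apply, Prod.fst_add, Prod.snd_add] <;> ring
  · ext b
    simp only [Set.mem_range, Set.mem_setOf_eq]
    constructor
    · rintro ⟨α, rfl⟩
      rw [fdot_self]
      show (∑ i, pabs ((fmap α).1 i)) + (fmap α).2 = 0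
      have h : ∑ i, pabs ((fmap α).1 i) = ∑ i, pabs (α i) := sum_pabs_diag α _ _
      rw [h]
      exact z2_add_self _
    · intro hb
      refine ⟨gmap b, ?_⟩
      rw [fdot_self] at hb
      have hbsum : ∑ i, pabs (b.1 i) = b.2 := by
        linear_combination hb - z2_add_self b.2
      have hg : ∀ s : Finset (Fin n), ∑ k ∈ s, pabs (gmap b k) = ∑ k ∈ s, pabs (b.1 k) :=
        fun s => sum_pabs_diag b.1 _ s
      ext i
      · show (gmap b i + (∑ k ∈ Finset.Iio i, pabs (gmap b k),
            ∑ k ∈ Finset.Iio i, pabs (gmap b k))).1 = (b.1 i).1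
        rw [hg]
        simp only [gmap, Prod.fst_add]
        linear_combination z2_add_self (∑ k ∈ Finset.Iio i, pabs (b.1 k))
      · show (gmap b i + (∑ k ∈ Finset.Iio i, pabs (gmap b k),
            ∑ k ∈ Finset.Iio i, pabs (gmap b k))).2 = (b.1 i).2
        rw [hg]
        simp only [gmap, Prod.snd_add]
        linear_combination z2_add_self (∑ k ∈ Finset.Iio i, pabs (b.1 k))
      · show ∑ k, pabs (gmap b k) = b.2
        rw [hg, hbsum]
end
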